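/- Stochastic representation: assume g(x) > 0 for all x ∈ ℝ, so that G : ℝ → (0,1) is a continuous strictly increasing bijection with inverse G⁻¹. Define the density h on (0,1) by h(u) = (σ/Z_θ)·[ρ + δ·T(G⁻¹(u); α, p)] and let H(u) = ∫₀ᵘ h(t) dt be its cumulative distribution function. Then for every x ∈ ℝ, the cumulative distribution function of TD(θ) satisfies F(x; θ) = H(G((x−μ)/σ)). Consequently, if U is a random variable with density h, then X = μ + σ·G⁻¹(U) has density f(·; θ), i.e. X ~ TD(θ). -/

import Mathlib

open MeasureTheory Real Set Filter
open scoped ENNReal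

noncomputable def lincGamma (p u : ℝ) : ℝ := ∫ w in (0:ℝ)..u, w ^ (p - 1) * Real.exp (-w)

noncomputable def Tfun (p α x : ℝ) : ℝ := lincGamma p (x ^ 2 / α ^ 2) / Real.Gamma p

noncomputable def gammaPDF (p y : ℝ) : ℝ := y ^ (p - 1) * Real.exp (-y) / Real.Gamma p

noncomputable def Znorm (p σ α ρ δ : ℝ) (g : ℝ → ℝ) : ℝ :=
  σ * ∫ w : ℝ, (ρ + δ * Tfun p α w) * g w

noncomputable def tdPDF (p μ σ α ρ δ : ℝ) (g : ℝ → ℝ) (x : ℝ) : ℝ :=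
  (1 / Znorm p σ α ρ δ g) * (ρ + δ * Tfun p α ((x - μ) / σ)) * g ((x - μ) / σ)

noncomputable def cdfOf (d : ℝ → ℝ) (x : ℝ) : ℝ := ∫ t in Iic x, d t

namespace Stmt12Aux

lemma gammaIntegrand_integrableOn {p : ℝ} (hp : 0 < p) :
    IntegrableOn (fun w : ℝ => w ^ (p - 1) * Real.exp (-w)) (Ioi 0) :=
  (Real.GammaIntegral_convergent hp).congr_fun (fun x _ => mul_comm _ _) measurableSet_Ioi

lemma gammaIntegrand_intInt {p : ℝ} (hp : 0 < p) {a b : ℝ} (ha : 0 ≤ a) (hab : a ≤ b) :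
    IntervalIntegrable (fun w : ℝ => w ^ (p - 1) * Real.exp (-w)) volume a b := by
  rw [intervalIntegrable_iff_integrableOn_Ioc_of_le hab]
  exact (gammaIntegrand_integrableOn hp).mono_set
    (Ioc_subset_Ioi_self.trans (Ioi_subset_Ioi ha))

lemma lincGamma_nonneg {p : ℝ} (_hp : 0 < p) {u : ℝ} (hu : 0 ≤ u) : 0 ≤ lincGamma p u := by
  refine intervalIntegral.integral_nonneg hu (fun w hw => ?_)
  exact mul_nonneg (Real.rpow_nonneg hw.1 _) (Real.exp_nonneg _)

lemma lincGamma_pos {p : ℝ} (hp : 0 < p) {u : ℝ} (hu : 0 < u) : 0 < lincGamma p u := by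
  refine intervalIntegral.intervalIntegral_pos_of_pos_on (gammaIntegrand_intInt hp le_rfl hu.le)
    (fun x hx => ?_) hu
  exact mul_pos (Real.rpow_pos_of_pos hx.1 _) (Real.exp_pos _)

lemma lincGamma_mono {p : ℝ} (hp : 0 < p) {a b : ℝ} (ha : 0 ≤ a) (hab : a ≤ b) :
    lincGamma p a ≤ lincGamma p b := by
  have key := intervalIntegral.integral_add_adjacent_intervals
    (gammaIntegrand_intInt hp le_rfl ha) (gammaIntegrand_intInt hp ha hab)
  have hnn : 0 ≤ ∫ w in a..b, w ^ (p - 1) * Real.exp (-w) := by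
    refine intervalIntegral.integral_nonneg hab (fun w hw => ?_)
    exact mul_nonneg (Real.rpow_nonneg (ha.trans hw.1) _) (Real.exp_nonneg _)
  have : lincGamma p a + ∫ w in a..b, w ^ (p - 1) * Real.exp (-w) = lincGamma p b := key
  linarith

lemma lincGamma_le_Gamma {p : ℝ} (hp : 0 < p) {u : ℝ} (hu : 0 ≤ u) :
    lincGamma p u ≤ Real.Gamma p := by
  rw [Real.Gamma_eq_integral hp]
  have h1 : lincGamma p u = ∫ w in Ioc 0 u, Real.exp (-w) * w ^ (p - 1) := by
    rw [lincGamma, intervalIntegral.integral_of_le hu]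
    exact setIntegral_congr_fun measurableSet_Ioc (fun x _ => mul_comm _ _)
  rw [h1]
  refine setIntegral_mono_set (Real.GammaIntegral_convergent hp) ?_
    (HasSubset.Subset.eventuallyLE Ioc_subset_Ioi_self)
  rw [EventuallyLE, ae_restrict_iff' measurableSet_Ioi]
  filter_upwards with x hx
  exact mul_nonneg (Real.exp_nonneg _) (Real.rpow_nonneg (le_of_lt hx) _)

lemma Tfun_nonneg {p α : ℝ} (hp : 0 < p) (x : ℝ) : 0 ≤ Tfun p α x :=
  div_nonneg (lincGamma_nonneg hp (by positivity)) (Real.Gamma_pos_of_pos hp).le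

lemma Tfun_le_one {p α : ℝ} (hp : 0 < p) (x : ℝ) : Tfun p α x ≤ 1 :=
  (div_le_one (Real.Gamma_pos_of_pos hp)).mpr (lincGamma_le_Gamma hp (by positivity))

lemma Tfun_pos {p α : ℝ} (hp : 0 < p) (hα : 0 < α) {x : ℝ} (hx : x ≠ 0) :
    0 < Tfun p α x := by
  refine div_pos (lincGamma_pos hp ?_) (Real.Gamma_pos_of_pos hp)
  positivity

lemma measurable_Tfun {p α : ℝ} (hp : 0 < p) : Measurable (Tfun p α) := by
  have hm : Measurable (fun u : ℝ => lincGamma p (max u 0)) :=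
    Monotone.measurable (fun u1 u2 h =>
      lincGamma_mono hp (le_max_right _ _) (max_le_max h le_rfl))
  have heq : Tfun p α = fun x => lincGamma p (max (x ^ 2 / α ^ 2) 0) / Real.Gamma p := by
    funext x
    rw [Tfun, max_eq_left (by positivity)]
  rw [heq]
  exact (hm.comp (by fun_prop)).div_const _

lemma map_withDensity_comp {φ : ℝ → ℝ} (hφ : Measurable φ) {f : ℝ → ℝ≥0∞}
    (hf : Measurable f) (μ : Measure ℝ) :
    Measure.map φ (μ.withDensity (fun x => f (φ x))) = (Measure.map φ μ).withDensity f := by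
  ext s hs
  rw [Measure.map_apply hφ hs, withDensity_apply _ (hφ hs), withDensity_apply _ hs,
    setLIntegral_map hs hf hφ]

end Stmt12Aux

open Stmt12Aux

/-- stochastic representation `F(x;θ) = H(G((x−μ)/σ))` and
`X = μ + σ G⁻¹(U) ~ TD(θ)` when `U` has density `h`. -/
theorem stmt12 (p μ σ α ρ δ : ℝ) (hp : 0 < p) (hσ : 0 < σ) (hα : 0 < α)
    (hρ : 0 ≤ ρ) (hδ : 0 ≤ δ) (hρδ : 0 < ρ + δ)
    (g : ℝ → ℝ) (hgpos : ∀ x, 0 < g x) (hgm : Measurable g)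
    (hgi : Integrable g) (hg1 : (∫ x : ℝ, g x) = 1)
    (Ginv : ℝ → ℝ) (hGinvm : Measurable Ginv)
    (hleft : ∀ x : ℝ, Ginv (cdfOf g x) = x)
    (hright : ∀ u ∈ Ioo (0:ℝ) 1, cdfOf g (Ginv u) = u) :
    (∀ x : ℝ,
      cdfOf (tdPDF p μ σ α ρ δ g) x
        = ∫ t in (0:ℝ)..(cdfOf g ((x - μ) / σ)),
            (σ / Znorm p σ α ρ δ g) * (ρ + δ * Tfun p α (Ginv t)))
    ∧ Measure.map (fun u : ℝ => μ + σ * Ginv u)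
        (volume.withDensity (fun u : ℝ => ENNReal.ofReal
          (Set.indicator (Ioo (0:ℝ) 1)
            (fun t => (σ / Znorm p σ α ρ δ g) * (ρ + δ * Tfun p α (Ginv t))) u)))
      = volume.withDensity (fun x : ℝ => ENNReal.ofReal (tdPDF p μ σ α ρ δ g x)) := by
  have hTm : Measurable (Tfun p α) := measurable_Tfun hp
  have hT0 : ∀ w, 0 ≤ Tfun p α w := Tfun_nonneg hp
  have hT1 : ∀ w, Tfun p α w ≤ 1 := Tfun_le_one hp
  -- positivity of the coefficient ρ + δ T(w) off 0
  have hcoef0 : ∀ w, 0 ≤ ρ + δ * Tfun p α w := fun w =>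
    add_nonneg hρ (mul_nonneg hδ (hT0 w))
  have hcoefpos : ∀ w : ℝ, w ≠ 0 → 0 < ρ + δ * Tfun p α w := by
    intro w hw
    rcases hρ.lt_or_eq with h | h
    · exact lt_add_of_lt_of_nonneg h (mul_nonneg hδ (hT0 w))
    · have hδpos : 0 < δ := by rw [← h] at hρδ; simpa using hρδ
      have := Tfun_pos hp hα hw
      have : 0 < δ * Tfun p α w := mul_pos hδpos this
      linarith
  have hcm : Measurable (fun w => (ρ + δ * Tfun p α w) * g w) :=
    (((hTm.const_mul δ).const_add ρ).mul hgm)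
  have hint : Integrable (fun w => (ρ + δ * Tfun p α w) * g w) := by
    refine Integrable.mono (hgi.const_mul (ρ + δ)) hcm.aestronglyMeasurable ?_
    filter_upwards with w
    rw [Real.norm_eq_abs, Real.norm_eq_abs, abs_of_nonneg (mul_nonneg (hcoef0 w) (hgpos w).le),
      abs_of_nonneg (mul_nonneg hρδ.le (hgpos w).le)]
    have h1 : ρ + δ * Tfun p α w ≤ ρ + δ := by nlinarith [hT0 w, hT1 w]
    nlinarith [(hgpos w).le]
  have hZpos : 0 < Znorm p σ α ρ δ g := by
    refine mul_pos hσ ?_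
    rw [integral_pos_iff_support_of_nonneg_ae
      (ae_of_all _ fun w => mul_nonneg (hcoef0 w) (hgpos w).le) hint]
    have hsub : Ioi (0:ℝ) ⊆ Function.support fun w => (ρ + δ * Tfun p α w) * g w :=
      fun w hw => (mul_pos (hcoefpos w (ne_of_gt hw)) (hgpos w)).ne'
    calc (0:ℝ≥0∞) < volume (Ioi (0:ℝ)) := by rw [Real.volume_Ioi]; exact ENNReal.zero_lt_top
    _ ≤ _ := measure_mono hsub
  -- CDF facts
  have hGsm : StrictMono (cdfOf g) := by
    intro a b hab
    have hsub : cdfOf g b - cdfOf g a = ∫ t in a..b, g t :=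
      intervalIntegral.integral_Iic_sub_Iic hgi.integrableOn hgi.integrableOn
    have hpos : 0 < ∫ t in a..b, g t :=
      intervalIntegral.intervalIntegral_pos_of_pos hgi.intervalIntegrable hgpos hab
    linarith
  have hGm : Measurable (cdfOf g) := hGsm.monotone.measurable
  have hG01 : ∀ y, cdfOf g y ∈ Ioo (0:ℝ) 1 := by
    intro y
    have hIicpos : 0 < cdfOf g y := by
      rw [cdfOf, setIntegral_pos_iff_support_of_nonneg_ae
        (ae_of_all _ fun w => (hgpos w).le) hgi.integrableOn]
      have : Function.support g = univ := eq_univ_of_forall fun w => (hgpos w).ne'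
      rw [this, univ_inter, Real.volume_Iic]
      exact ENNReal.zero_lt_top
    have hIoipos : 0 < ∫ t in Ioi y, g t := by
      rw [setIntegral_pos_iff_support_of_nonneg_ae
        (ae_of_all _ fun w => (hgpos w).le) hgi.integrableOn]
      have : Function.support g = univ := eq_univ_of_forall fun w => (hgpos w).ne'
      rw [this, univ_inter, Real.volume_Ioi]
      exact ENNReal.zero_lt_top
    have hsum : cdfOf g y + ∫ t in Ioi y, g t = 1 := by
      rw [cdfOf, intervalIntegral.integral_Iic_add_Ioi hgi.integrableOn hgi.integrableOn, hg1]
    exact ⟨hIicpos, by linarith⟩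
  have hGle : ∀ u ∈ Ioo (0:ℝ) 1, ∀ y, (cdfOf g y ≤ u ↔ y ≤ Ginv u) := by
    intro u hu y
    conv_lhs => rw [← hright u hu]
    exact hGsm.le_iff_le
  have hGle' : ∀ u ∈ Ioo (0:ℝ) 1, ∀ y, (u ≤ cdfOf g y ↔ Ginv u ≤ y) := by
    intro u hu y
    conv_lhs => rw [← hright u hu]
    exact hGsm.le_iff_le
  -- the measure ν with density g
  set ν : Measure ℝ := volume.withDensity (fun w => ENNReal.ofReal (g w)) with hν
  have hνIic : ∀ y, ν (Iic y) = ENNReal.ofReal (cdfOf g y) := by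
    intro y
    rw [hν, withDensity_apply _ measurableSet_Iic,
      ← ofReal_integral_eq_lintegral_ofReal hgi.integrableOn
        (ae_of_all _ fun w => (hgpos w).le)]
    rfl
  have hνuniv : ν univ = 1 := by
    rw [hν, withDensity_apply _ MeasurableSet.univ, Measure.restrict_univ,
      ← ofReal_integral_eq_lintegral_ofReal hgi (ae_of_all _ fun w => (hgpos w).le), hg1,
      ENNReal.ofReal_one]
  haveI : IsFiniteMeasure ν := ⟨by rw [hνuniv]; exact ENNReal.one_lt_top⟩
  haveI : IsFiniteMeasure (Measure.map (cdfOf g) ν) := Measure.isFiniteMeasure_map ν _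
  have hmapG : Measure.map (cdfOf g) ν = volume.restrict (Ioo 0 1) := by
    refine Measure.ext_of_Iic _ _ (fun a => ?_)
    rw [Measure.map_apply hGm measurableSet_Iic, Measure.restrict_apply measurableSet_Iic]
    rcases le_or_gt a 0 with ha | ha
    · have h1 : cdfOf g ⁻¹' Iic a = ∅ := by
        refine eq_empty_of_forall_notMem fun y hy => ?_
        exact absurd (lt_of_lt_of_le (hG01 y).1 hy) (not_lt.mpr ha)
      have h2 : Iic a ∩ Ioo (0:ℝ) 1 = ∅ := by
        refine eq_empty_of_forall_notMem fun t ht => ?_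
        rcases ht with ⟨ht1, ht2, _⟩
        exact absurd (lt_of_lt_of_le ht2 ht1) (not_lt.mpr ha)
      rw [h1, h2, measure_empty, measure_empty]
    rcases lt_or_ge a 1 with ha1 | ha1
    · have hmem : a ∈ Ioo (0:ℝ) 1 := ⟨ha, ha1⟩
      have h1 : cdfOf g ⁻¹' Iic a = Iic (Ginv a) := by
        ext y; simpa using hGle a hmem y
      have h2 : Iic a ∩ Ioo (0:ℝ) 1 = Ioc 0 a := by
        ext t
        simp only [mem_inter_iff, mem_Iic, mem_Ioo, mem_Ioc]
        constructor
        · rintro ⟨h1t, h2t, _⟩; exact ⟨h2t, h1t⟩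
        · rintro ⟨h1t, h2t⟩; exact ⟨h2t, h1t, lt_of_le_of_lt h2t ha1⟩
      rw [h1, h2, hνIic, hright a hmem, Real.volume_Ioc, sub_zero]
    · have h1 : cdfOf g ⁻¹' Iic a = univ :=
        eq_univ_of_forall fun y => le_trans (hG01 y).2.le ha1
      have h2 : Iic a ∩ Ioo (0:ℝ) 1 = Ioo 0 1 :=
        inter_eq_self_of_subset_right fun t ht => le_trans ht.2.le ha1
      rw [h1, h2, hνuniv, Real.volume_Ioo]
      norm_num
  have hmapGinv : Measure.map Ginv (volume.restrict (Ioo 0 1)) = ν := by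
    rw [← hmapG, Measure.map_map hGinvm hGm]
    have : Ginv ∘ cdfOf g = id := funext hleft
    rw [this, Measure.map_id]
  -- abbreviations for the densities
  have hcwm : Measurable (fun w => ENNReal.ofReal
      ((σ / Znorm p σ α ρ δ g) * (ρ + δ * Tfun p α w))) :=
    (((hTm.const_mul δ).const_add ρ).const_mul _).ennreal_ofReal
  have htdm : Measurable (tdPDF p μ σ α ρ δ g) := by
    unfold tdPDF
    have haffm : Measurable (fun x : ℝ => (x - μ) / σ) := by fun_prop
    exact ((((hTm.comp haffm).const_mul δ).const_add ρ).const_mul _).mul (hgm.comp haffm)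
  have htd0 : ∀ t, 0 ≤ tdPDF p μ σ α ρ δ g t := by
    intro t
    exact mul_nonneg (mul_nonneg (by positivity) (hcoef0 _)) (hgpos _).le
  have hcw0 : ∀ w, 0 ≤ (σ / Znorm p σ α ρ δ g) * (ρ + δ * Tfun p α w) := by
    intro w
    have : 0 ≤ σ / Znorm p σ α ρ δ g := div_nonneg hσ.le hZpos.le
    exact mul_nonneg this (hcoef0 w)
  have hdens : (fun u : ℝ => ENNReal.ofReal
      (Set.indicator (Ioo (0:ℝ) 1)
        (fun t => (σ / Znorm p σ α ρ δ g) * (ρ + δ * Tfun p α (Ginv t))) u))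
      = Set.indicator (Ioo (0:ℝ) 1)
        (fun t => ENNReal.ofReal ((σ / Znorm p σ α ρ δ g) * (ρ + δ * Tfun p α (Ginv t)))) := by
    funext u
    by_cases hu : u ∈ Ioo (0:ℝ) 1 <;> simp [indicator, hu]
  -- PART 2
  have hpart2 : Measure.map (fun u : ℝ => μ + σ * Ginv u)
        (volume.withDensity (fun u : ℝ => ENNReal.ofReal
          (Set.indicator (Ioo (0:ℝ) 1)
            (fun t => (σ / Znorm p σ α ρ δ g) * (ρ + δ * Tfun p α (Ginv t))) u)))
      = volume.withDensity (fun x : ℝ => ENNReal.ofReal (tdPDF p μ σ α ρ δ g x)) := by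
    rw [hdens, withDensity_indicator measurableSet_Ioo]
    have hcomp : (fun u : ℝ => μ + σ * Ginv u) = (fun w : ℝ => μ + σ * w) ∘ Ginv := rfl
    have hAm : Measurable (fun w : ℝ => μ + σ * w) := by fun_prop
    rw [hcomp, ← Measure.map_map hAm hGinvm]
    rw [map_withDensity_comp hGinvm hcwm (volume.restrict (Ioo 0 1)), hmapGinv]
    rw [hν, ← withDensity_mul _ hgm.ennreal_ofReal hcwm]
    have hdeq : (fun w : ℝ => ENNReal.ofReal (g w) *
        ENNReal.ofReal ((σ / Znorm p σ α ρ δ g) * (ρ + δ * Tfun p α w)))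
        = fun w : ℝ => ENNReal.ofReal σ *
          (fun x : ℝ => ENNReal.ofReal (tdPDF p μ σ α ρ δ g x)) ((fun w : ℝ => μ + σ * w) w) := by
      funext w
      simp only
      rw [← ENNReal.ofReal_mul (hgpos w).le, ← ENNReal.ofReal_mul hσ.le]
      congr 1
      have hw : (μ + σ * w - μ) / σ = w := by field_simp; ring
      rw [tdPDF, hw]
      field_simp
    rw [show ((fun w : ℝ => ENNReal.ofReal (g w)) * fun w : ℝ => ENNReal.ofReal
        ((σ / Znorm p σ α ρ δ g) * (ρ + δ * Tfun p α w)))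
        = fun w : ℝ => ENNReal.ofReal (g w) *
          ENNReal.ofReal ((σ / Znorm p σ α ρ δ g) * (ρ + δ * Tfun p α w)) from rfl, hdeq]
    have hsmul : (fun w : ℝ => ENNReal.ofReal σ *
        (fun x : ℝ => ENNReal.ofReal (tdPDF p μ σ α ρ δ g x)) ((fun w : ℝ => μ + σ * w) w))
        = ENNReal.ofReal σ • fun w : ℝ =>
          (fun x : ℝ => ENNReal.ofReal (tdPDF p μ σ α ρ δ g x)) ((fun w : ℝ => μ + σ * w) w) := rfl
    rw [hsmul, withDensity_smul' _ _ ENNReal.ofReal_ne_top, Measure.map_smul,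
      map_withDensity_comp hAm htdm.ennreal_ofReal volume]
    have hmapA : Measure.map (fun w : ℝ => μ + σ * w) volume
        = ENNReal.ofReal σ⁻¹ • volume := by
      have h1 : (fun w : ℝ => μ + σ * w) = (fun x : ℝ => μ + x) ∘ (fun w : ℝ => σ * w) := rfl
      rw [h1, ← Measure.map_map (by fun_prop) (by fun_prop),
        Real.map_volume_mul_left hσ.ne', Measure.map_smul, map_add_left_eq_self volume μ,
        abs_of_pos (inv_pos.mpr hσ)]
    rw [hmapA, withDensity_smul_measure, smul_smul, ← ENNReal.ofReal_mul hσ.le,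
      mul_inv_cancel₀ hσ.ne', ENNReal.ofReal_one, one_smul]
  refine ⟨?_, hpart2⟩
  -- PART 1
  intro x
  have hbI : cdfOf g ((x - μ) / σ) ∈ Ioo (0:ℝ) 1 := hG01 _
  set b := cdfOf g ((x - μ) / σ) with hb
  rw [intervalIntegral.integral_of_le hbI.1.le]
  have hAGm : Measurable (fun u : ℝ => μ + σ * Ginv u) := by fun_prop
  have hLHS : cdfOf (tdPDF p μ σ α ρ δ g) x
      = (∫⁻ t in Iic x, ENNReal.ofReal (tdPDF p μ σ α ρ δ g t)).toReal := by
    rw [cdfOf]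
    exact integral_eq_lintegral_of_nonneg_ae (ae_of_all _ htd0)
      htdm.aestronglyMeasurable
  have hRHS : (∫ t in Ioc 0 b, (σ / Znorm p σ α ρ δ g) * (ρ + δ * Tfun p α (Ginv t)))
      = (∫⁻ t in Ioc 0 b, ENNReal.ofReal
          ((σ / Znorm p σ α ρ δ g) * (ρ + δ * Tfun p α (Ginv t)))).toReal :=
    integral_eq_lintegral_of_nonneg_ae (ae_of_all _ fun t => hcw0 (Ginv t))
      ((((hTm.const_mul δ).const_add ρ).const_mul (σ / Znorm p σ α ρ δ g)).comp
        hGinvm).aestronglyMeasurable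
  rw [hLHS, hRHS]
  congr 1
  have hset : ((fun u : ℝ => μ + σ * Ginv u) ⁻¹' Iic x) ∩ Ioo (0:ℝ) 1 = Ioc 0 b := by
    have haff : ∀ w : ℝ, (μ + σ * w ≤ x ↔ w ≤ (x - μ) / σ) := by
      intro w
      rw [le_div_iff₀ hσ]
      constructor <;> intro h <;> nlinarith
    ext u
    simp only [mem_inter_iff, mem_preimage, mem_Iic, mem_Ioo, mem_Ioc]
    constructor
    · rintro ⟨h1, h2, h3⟩
      have hGy : Ginv u ≤ (x - μ) / σ := (haff _).mp h1
      exact ⟨h2, (hGle' u ⟨h2, h3⟩ _).mpr hGy⟩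
    · rintro ⟨h1, h2⟩
      have hu : u ∈ Ioo (0:ℝ) 1 := ⟨h1, lt_of_le_of_lt h2 hbI.2⟩
      have hGy : Ginv u ≤ (x - μ) / σ := (hGle' u hu _).mp h2
      exact ⟨(haff _).mpr hGy, hu⟩
  calc ∫⁻ t in Iic x, ENNReal.ofReal (tdPDF p μ σ α ρ δ g t)
      = volume.withDensity (fun t : ℝ => ENNReal.ofReal (tdPDF p μ σ α ρ δ g t)) (Iic x) :=
        (withDensity_apply _ measurableSet_Iic).symm
    _ = Measure.map (fun u : ℝ => μ + σ * Ginv u)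
        (volume.withDensity (fun u : ℝ => ENNReal.ofReal
          (Set.indicator (Ioo (0:ℝ) 1)
            (fun t => (σ / Znorm p σ α ρ δ g) * (ρ + δ * Tfun p α (Ginv t))) u))) (Iic x) := by
        rw [hpart2]
    _ = (volume.withDensity (fun u : ℝ => ENNReal.ofReal
          (Set.indicator (Ioo (0:ℝ) 1)
            (fun t => (σ / Znorm p σ α ρ δ g) * (ρ + δ * Tfun p α (Ginv t))) u)))
        ((fun u : ℝ => μ + σ * Ginv u) ⁻¹' Iic x) :=
        Measure.map_apply hAGm measurableSet_Iic
    _ = ∫⁻ u in (fun u : ℝ => μ + σ * Ginv u) ⁻¹' Iic x,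
          Set.indicator (Ioo (0:ℝ) 1)
            (fun t => ENNReal.ofReal ((σ / Znorm p σ α ρ δ g) * (ρ + δ * Tfun p α (Ginv t)))) u := by
        rw [withDensity_apply _ (hAGm measurableSet_Iic), hdens]
    _ = ∫⁻ u in Ioo (0:ℝ) 1 ∩ ((fun u : ℝ => μ + σ * Ginv u) ⁻¹' Iic x),
          ENNReal.ofReal ((σ / Znorm p σ α ρ δ g) * (ρ + δ * Tfun p α (Ginv u))) :=
        setLIntegral_indicator measurableSet_Ioo _
    _ = ∫⁻ t in Ioc 0 b, ENNReal.ofReal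
          ((σ / Znorm p σ α ρ δ g) * (ρ + δ * Tfun p α (Ginv t))) := by rw [inter_comm, hset]
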